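/- Let H be a finite-dimensional complex Hilbert space with dim H ≥ 3. Then there exists a finite set O of rank-1 projections on H for which no valuation exists. -/

import Mathlib

section Defs

variable {K : Type*} [NormedAddCommGroup K] [InnerProductSpace ℂ K]

/-- A rank-1 projection: Hermitian idempotent of rank 1. -/
def IsRankOneProjOp (T : K →L[ℂ] K) : Prop :=
  (∀ x y : K, inner ℂ (T x) y = (inner ℂ x (T y) : ℂ)) ∧ T ∘L T = T ∧
    LinearMap.rank (T : K →ₗ[ℂ] K) = 1

/-- A valuation for a set `O` of operators: `v` assigns to each `A ∈ O` one of its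
eigenvalues, such that any pairwise commuting finite subfamily has a common nonzero
eigenvector realizing the assigned values (joint spectrum membership). -/
def IsValuationOp (O : Set (K →L[ℂ] K)) (v : (K →L[ℂ] K) → ℝ) : Prop :=
  (∀ A ∈ O, ∃ ψ : K, ψ ≠ 0 ∧ A ψ = (v A : ℂ) • ψ) ∧
  (∀ s : Finset (K →L[ℂ] K), ↑s ⊆ O →
    (∀ A ∈ s, ∀ B ∈ s, A ∘L B = B ∘L A) →
    ∃ ψ : K, ψ ≠ 0 ∧ ∀ A ∈ s, A ψ = (v A : ℂ) • ψ)

end Defs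



open scoped InnerProductSpace ComplexConjugate

noncomputable section KSComb

abbrev Eu (n : ℕ) := EuclideanSpace ℂ (Fin n)

/-- Kochen–Specker property for a finite set of nonzero vectors in `ℂ^n`. -/
def KSProp (n : ℕ) (V : Finset (Eu n)) : Prop :=
  (∀ u ∈ V, u ≠ 0) ∧
  ∀ g : Eu n → Bool,
    (∀ u ∈ V, ∀ w ∈ V, (inner ℂ u w : ℂ) = 0 → ¬(g u = true ∧ g w = true)) →
    (∀ S : Finset (Eu n), S ⊆ V → S.card = n →
        (∀ u ∈ S, ∀ w ∈ S, u ≠ w → (inner ℂ u w : ℂ) = 0) → ∃ u ∈ S, g u = true) →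
    False

-- embedding along an injective index map
def emb {n m : ℕ} (f : Fin n → Fin m) (x : Eu n) : Eu m :=
  WithLp.toLp 2 (Function.extend f x 0)

lemma emb_apply {n m : ℕ} {f : Fin n → Fin m} (hf : Function.Injective f)
    (x : Eu n) (i : Fin n) : emb f x (f i) = x i :=
  hf.extend_apply x 0 i

lemma emb_apply' {n m : ℕ} (f : Fin n → Fin m) (x : Eu n) {k : Fin m}
    (hk : ¬∃ i, f i = k) : emb f x k = 0 :=
  Function.extend_apply' x (0 : Fin m → ℂ) k hk

lemma sum_emb {n m : ℕ} {f : Fin n → Fin m} (hf : Function.Injective f)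
    (c : Fin n → ℂ) : ∑ k, Function.extend f c 0 k = ∑ i, c i := by
  have h1 : ∑ k, Function.extend f c 0 k
      = ∑ k ∈ Finset.univ.image f, Function.extend f c 0 k := by
    refine (Finset.sum_subset (Finset.subset_univ _) ?_).symm
    intro k _ hk
    refine Function.extend_apply' c (0 : Fin m → ℂ) k ?_
    rintro ⟨i, hi⟩
    exact hk (Finset.mem_image.2 ⟨i, Finset.mem_univ i, hi⟩)
  rw [h1, Finset.sum_image (fun x _ y _ h => hf h)]
  exact Finset.sum_congr rfl fun i _ => hf.extend_apply c 0 i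

lemma inner_emb {n m : ℕ} {f : Fin n → Fin m} (hf : Function.Injective f)
    (x y : Eu n) : (inner ℂ (emb f x) (emb f y) : ℂ) = inner ℂ x y := by
  rw [PiLp.inner_apply, PiLp.inner_apply]
  have : ∀ k, (inner ℂ (emb f x k) (emb f y k) : ℂ)
      = Function.extend f (fun i => inner ℂ (x i) (y i)) 0 k := by
    intro k
    by_cases hk : ∃ i, f i = k
    · obtain ⟨i, rfl⟩ := hk
      rw [emb_apply hf, emb_apply hf, hf.extend_apply]
    · rw [emb_apply' _ _ hk, emb_apply' _ _ hk, Function.extend_apply' _ _ _ hk]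
      simp
  rw [Finset.sum_congr rfl fun k _ => this k, sum_emb hf]

lemma emb_injective {n m : ℕ} {f : Fin n → Fin m} (hf : Function.Injective f) :
    Function.Injective (emb f) := by
  intro x y h
  ext i
  have := congrFun (congrArg WithLp.ofLp h) (f i)
  rwa [emb_apply hf, emb_apply hf] at this

lemma emb_ne_zero {n m : ℕ} {f : Fin n → Fin m} (hf : Function.Injective f)
    {x : Eu n} (hx : x ≠ 0) : emb f x ≠ 0 := by
  intro h
  apply hx
  rw [← inner_self_eq_zero (𝕜 := ℂ), ← inner_emb hf, h, inner_zero_right]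

def pvec : Fin 33 → Fin 3 → ℤ√2 := ![![⟨0,0⟩,⟨0,0⟩,⟨1,0⟩], ![⟨0,0⟩,⟨0,1⟩,⟨-1,0⟩], ![⟨0,0⟩,⟨0,1⟩,⟨1,0⟩], ![⟨0,0⟩,⟨1,0⟩,⟨-1,0⟩], ![⟨0,0⟩,⟨1,0⟩,⟨0,-1⟩], ![⟨0,0⟩,⟨1,0⟩,⟨0,0⟩], ![⟨0,0⟩,⟨1,0⟩,⟨0,1⟩], ![⟨0,0⟩,⟨1,0⟩,⟨1,0⟩], ![⟨0,1⟩,⟨-1,0⟩,⟨-1,0⟩], ![⟨0,1⟩,⟨-1,0⟩,⟨0,0⟩], ![⟨0,1⟩,⟨-1,0⟩,⟨1,0⟩], ![⟨0,1⟩,⟨0,0⟩,⟨-1,0⟩], ![⟨0,1⟩,⟨0,0⟩,⟨1,0⟩], ![⟨0,1⟩,⟨1,0⟩,⟨-1,0⟩], ![⟨0,1⟩,⟨1,0⟩,⟨0,0⟩], ![⟨0,1⟩,⟨1,0⟩,⟨1,0⟩], ![⟨1,0⟩,⟨-1,0⟩,⟨0,-1⟩], ![⟨1,0⟩,⟨-1,0⟩,⟨0,0⟩],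 ![⟨1,0⟩,⟨-1,0⟩,⟨0,1⟩], ![⟨1,0⟩,⟨0,-1⟩,⟨-1,0⟩], ![⟨1,0⟩,⟨0,-1⟩,⟨0,0⟩], ![⟨1,0⟩,⟨0,-1⟩,⟨1,0⟩], ![⟨1,0⟩,⟨0,0⟩,⟨-1,0⟩], ![⟨1,0⟩,⟨0,0⟩,⟨0,-1⟩], ![⟨1,0⟩,⟨0,0⟩,⟨0,0⟩], ![⟨1,0⟩,⟨0,0⟩,⟨0,1⟩], ![⟨1,0⟩,⟨0,0⟩,⟨1,0⟩], ![⟨1,0⟩,⟨0,1⟩,⟨-1,0⟩], ![⟨1,0⟩,⟨0,1⟩,⟨0,0⟩], ![⟨1,0⟩,⟨0,1⟩,⟨1,0⟩], ![⟨1,0⟩,⟨1,0⟩,⟨0,-1⟩], ![⟨1,0⟩,⟨1,0⟩,⟨0,0⟩], ![⟨1,0⟩,⟨1,0⟩,⟨0,1⟩]]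
def pdot (u v : Fin 3 → ℤ√2) : ℤ√2 := u 0 * v 0 + u 1 * v 1 + u 2 * v 2
lemma peres_core (G : Fin 33 → Bool)
    (hE : ∀ i j : Fin 33, pdot (pvec i) (pvec j) = 0 → G i = true → G j = false)
    (hB : ∀ i j k : Fin 33, pdot (pvec i) (pvec j) = 0 → pdot (pvec i) (pvec k) = 0 →
      pdot (pvec j) (pvec k) = 0 → (G i = true ∨ G j = true ∨ G k = true)) : False := by
  rcases hB 0 5 24 (by decide) (by decide) (by decide) with h1|h1|h1
  · 
    have h2 : G 5 = false := hE 0 5 (by decide) h1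
    have h3 : G 9 = false := hE 0 9 (by decide) h1
    have h4 : G 14 = false := hE 0 14 (by decide) h1
    have h5 : G 17 = false := hE 0 17 (by decide) h1
    have h6 : G 20 = false := hE 0 20 (by decide) h1
    have h7 : G 24 = false := hE 0 24 (by decide) h1
    have h8 : G 28 = false := hE 0 28 (by decide) h1
    have h9 : G 31 = false := hE 0 31 (by decide) h1
    rcases hB 1 6 24 (by decide) (by decide) (by decide) with h10|h10|h10
    · 
      have h11 : G 6 = false := hE 1 6 (by decide) h10
      have h12 : G 16 = false := hE 1 16 (by decide) h10
      have h13 : G 32 = false := hE 1 32 (by decide) h10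
      have h14 : G 18 = true := by
        have h := hB 16 18 31 (by decide) (by decide) (by decide)
        rw [h12, h9] at h
        simpa using h
      have h15 : G 30 = true := by
        have h := hB 17 30 32 (by decide) (by decide) (by decide)
        rw [h5, h13] at h
        simpa using h
      have h16 : G 2 = false := hE 18 2 (by decide) h14
      have h17 : G 11 = false := hE 18 11 (by decide) h14
      have h18 : G 12 = false := hE 30 12 (by decide) h15
      have h19 : G 4 = true := by
        have h := hB 2 4 24 (by decide) (by decide) (by decide)
        rw [h16, h7] at h
        simpa using h
      have h20 : G 25 = true := by
        have h := hB 5 11 25 (by decide) (by decide) (by decide)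
        rw [h2, h17] at h
        simpa using h
      have h21 : G 23 = true := by
        have h := hB 5 12 23 (by decide) (by decide) (by decide)
        rw [h2, h18] at h
        simpa using h
      have h22 : G 19 = false := hE 4 19 (by decide) h19
      have h23 : G 29 = false := hE 4 29 (by decide) h19
      have h24 : G 8 = false := hE 25 8 (by decide) h20
      have h25 : G 10 = false := hE 23 10 (by decide) h21
      have h26 : G 13 = false := hE 25 13 (by decide) h20
      have h27 : G 15 = false := hE 23 15 (by decide) h21
      have h28 : G 3 = true := by
        have h := hB 3 8 15 (by decide) (by decide) (by decide)
        rw [h24, h27] at h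
        simpa using h
      have h29 : G 7 = true := by
        have h := hB 7 10 13 (by decide) (by decide) (by decide)
        rw [h25, h26] at h
        simpa using h
      have h30 := hE 3 7 (by decide) h28
      rw [h29] at h30
      exact Bool.noConfusion h30
    · 
      have h31 : G 1 = false := hE 6 1 (by decide) h10
      have h32 : G 21 = false := hE 6 21 (by decide) h10
      have h33 : G 27 = false := hE 6 27 (by decide) h10
      rcases hB 2 4 24 (by decide) (by decide) (by decide) with h34|h34|h34
      · 
        have h35 : G 4 = false := hE 2 4 (by decide) h34
        have h36 : G 18 = false := hE 2 18 (by decide) h34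
        have h37 : G 30 = false := hE 2 30 (by decide) h34
        have h38 : G 16 = true := by
          have h := hB 16 18 31 (by decide) (by decide) (by decide)
          rw [h36, h9] at h
          simpa using h
        have h39 : G 32 = true := by
          have h := hB 17 30 32 (by decide) (by decide) (by decide)
          rw [h5, h37] at h
          simpa using h
        have h40 : G 11 = false := hE 32 11 (by decide) h39
        have h41 : G 12 = false := hE 16 12 (by decide) h38
        have h42 : G 25 = true := by
          have h := hB 5 11 25 (by decide) (by decide) (by decide)
          rw [h2, h40] at h
          simpa using h
        have h43 : G 23 = true := by
          have h := hB 5 12 23 (by decide) (by decide) (by decide)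
          rw [h2, h41] at h
          simpa using h
        have h44 : G 8 = false := hE 25 8 (by decide) h42
        have h45 : G 10 = false := hE 23 10 (by decide) h43
        have h46 : G 13 = false := hE 25 13 (by decide) h42
        have h47 : G 15 = false := hE 23 15 (by decide) h43
        have h48 : G 3 = true := by
          have h := hB 3 8 15 (by decide) (by decide) (by decide)
          rw [h44, h47] at h
          simpa using h
        have h49 : G 7 = true := by
          have h := hB 7 10 13 (by decide) (by decide) (by decide)
          rw [h45, h46] at h
          simpa using h
        have h50 := hE 3 7 (by decide) h48
        rw [h49] at h50
        exact Bool.noConfusion h50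
      · 
        have h51 : G 2 = false := hE 4 2 (by decide) h34
        have h52 : G 19 = false := hE 4 19 (by decide) h34
        have h53 : G 29 = false := hE 4 29 (by decide) h34
        have h54 : G 26 = true := by
          have h := hB 19 26 27 (by decide) (by decide) (by decide)
          rw [h52, h33] at h
          simpa using h
        have h55 : G 22 = true := by
          have h := hB 21 22 29 (by decide) (by decide) (by decide)
          rw [h32, h53] at h
          simpa using h
        have h56 := hE 22 26 (by decide) h55
        rw [h54] at h56
        exact Bool.noConfusion h56
      · rw [h34] at h7
        exact Bool.noConfusion h7
    · rw [h10] at h7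
      exact Bool.noConfusion h7
  · 
    have h57 : G 0 = false := hE 5 0 (by decide) h1
    have h58 : G 11 = false := hE 5 11 (by decide) h1
    have h59 : G 12 = false := hE 5 12 (by decide) h1
    have h60 : G 22 = false := hE 5 22 (by decide) h1
    have h61 : G 23 = false := hE 5 23 (by decide) h1
    have h62 : G 24 = false := hE 5 24 (by decide) h1
    have h63 : G 25 = false := hE 5 25 (by decide) h1
    have h64 : G 26 = false := hE 5 26 (by decide) h1
    rcases hB 0 9 28 (by decide) (by decide) (by decide) with h65|h65|h65
    · rw [h65] at h57
      exact Bool.noConfusion h57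
    · 
      have h66 : G 27 = false := hE 9 27 (by decide) h65
      have h67 : G 28 = false := hE 9 28 (by decide) h65
      have h68 : G 29 = false := hE 9 29 (by decide) h65
      have h69 : G 19 = true := by
        have h := hB 19 26 27 (by decide) (by decide) (by decide)
        rw [h64, h66] at h
        simpa using h
      have h70 : G 21 = true := by
        have h := hB 21 22 29 (by decide) (by decide) (by decide)
        rw [h60, h68] at h
        simpa using h
      have h71 : G 4 = false := hE 19 4 (by decide) h69
      have h72 : G 6 = false := hE 21 6 (by decide) h70
      have h73 : G 14 = false := hE 19 14 (by decide) h69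
      have h74 : G 20 = true := by
        have h := hB 0 14 20 (by decide) (by decide) (by decide)
        rw [h57, h73] at h
        simpa using h
      have h75 : G 1 = true := by
        have h := hB 1 6 24 (by decide) (by decide) (by decide)
        rw [h72, h62] at h
        simpa using h
      have h76 : G 2 = true := by
        have h := hB 2 4 24 (by decide) (by decide) (by decide)
        rw [h71, h62] at h
        simpa using h
      have h77 : G 16 = false := hE 1 16 (by decide) h75
      have h78 : G 32 = false := hE 1 32 (by decide) h75
      have h79 : G 18 = false := hE 2 18 (by decide) h76
      have h80 : G 30 = false := hE 2 30 (by decide) h76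
      have h81 : G 13 = false := hE 20 13 (by decide) h74
      have h82 : G 15 = false := hE 20 15 (by decide) h74
      have h83 : G 31 = true := by
        have h := hB 16 18 31 (by decide) (by decide) (by decide)
        rw [h77, h79] at h
        simpa using h
      have h84 : G 17 = true := by
        have h := hB 17 30 32 (by decide) (by decide) (by decide)
        rw [h80, h78] at h
        simpa using h
      have h85 := hE 17 31 (by decide) h84
      rw [h83] at h85
      exact Bool.noConfusion h85
    · 
      have h86 : G 8 = false := hE 28 8 (by decide) h65
      have h87 : G 9 = false := hE 28 9 (by decide) h65
      have h88 : G 10 = false := hE 28 10 (by decide) h65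
      rcases hB 0 14 20 (by decide) (by decide) (by decide) with h89|h89|h89
      · rw [h89] at h57
        exact Bool.noConfusion h57
      · 
        have h90 : G 19 = false := hE 14 19 (by decide) h89
        have h91 : G 20 = false := hE 14 20 (by decide) h89
        have h92 : G 21 = false := hE 14 21 (by decide) h89
        have h93 : G 27 = true := by
          have h := hB 19 26 27 (by decide) (by decide) (by decide)
          rw [h90, h64] at h
          simpa using h
        have h94 : G 29 = true := by
          have h := hB 21 22 29 (by decide) (by decide) (by decide)
          rw [h92, h60] at h
          simpa using h
        have h95 : G 4 = false := hE 29 4 (by decide) h94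
        have h96 : G 6 = false := hE 27 6 (by decide) h93
        have h97 : G 1 = true := by
          have h := hB 1 6 24 (by decide) (by decide) (by decide)
          rw [h96, h62] at h
          simpa using h
        have h98 : G 2 = true := by
          have h := hB 2 4 24 (by decide) (by decide) (by decide)
          rw [h95, h62] at h
          simpa using h
        have h99 : G 16 = false := hE 1 16 (by decide) h97
        have h100 : G 32 = false := hE 1 32 (by decide) h97
        have h101 : G 18 = false := hE 2 18 (by decide) h98
        have h102 : G 30 = false := hE 2 30 (by decide) h98
        have h103 : G 31 = true := by
          have h := hB 16 18 31 (by decide) (by decide) (by decide)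
          rw [h99, h101] at h
          simpa using h
        have h104 : G 17 = true := by
          have h := hB 17 30 32 (by decide) (by decide) (by decide)
          rw [h102, h100] at h
          simpa using h
        have h105 := hE 17 31 (by decide) h104
        rw [h103] at h105
        exact Bool.noConfusion h105
      · 
        have h106 : G 13 = false := hE 20 13 (by decide) h89
        have h107 : G 14 = false := hE 20 14 (by decide) h89
        have h108 : G 15 = false := hE 20 15 (by decide) h89
        have h109 : G 3 = true := by
          have h := hB 3 8 15 (by decide) (by decide) (by decide)
          rw [h86, h108] at h
          simpa using h
        have h110 : G 7 = true := by
          have h := hB 7 10 13 (by decide) (by decide) (by decide)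
          rw [h88, h106] at h
          simpa using h
        have h111 := hE 3 7 (by decide) h109
        rw [h110] at h111
        exact Bool.noConfusion h111
  · 
    have h112 : G 0 = false := hE 24 0 (by decide) h1
    have h113 : G 1 = false := hE 24 1 (by decide) h1
    have h114 : G 2 = false := hE 24 2 (by decide) h1
    have h115 : G 3 = false := hE 24 3 (by decide) h1
    have h116 : G 4 = false := hE 24 4 (by decide) h1
    have h117 : G 5 = false := hE 24 5 (by decide) h1
    have h118 : G 6 = false := hE 24 6 (by decide) h1
    have h119 : G 7 = false := hE 24 7 (by decide) h1
    rcases hB 0 9 28 (by decide) (by decide) (by decide) with h120|h120|h120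
    · rw [h120] at h112
      exact Bool.noConfusion h112
    · 
      have h121 : G 27 = false := hE 9 27 (by decide) h120
      have h122 : G 28 = false := hE 9 28 (by decide) h120
      have h123 : G 29 = false := hE 9 29 (by decide) h120
      rcases hB 0 14 20 (by decide) (by decide) (by decide) with h124|h124|h124
      · rw [h124] at h112
        exact Bool.noConfusion h112
      · 
        have h125 : G 19 = false := hE 14 19 (by decide) h124
        have h126 : G 20 = false := hE 14 20 (by decide) h124
        have h127 : G 21 = false := hE 14 21 (by decide) h124
        have h128 : G 26 = true := by
          have h := hB 19 26 27 (by decide) (by decide) (by decide)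
          rw [h125, h121] at h
          simpa using h
        have h129 : G 22 = true := by
          have h := hB 21 22 29 (by decide) (by decide) (by decide)
          rw [h127, h123] at h
          simpa using h
        have h130 := hE 22 26 (by decide) h129
        rw [h128] at h130
        exact Bool.noConfusion h130
      · 
        have h131 : G 13 = false := hE 20 13 (by decide) h124
        have h132 : G 14 = false := hE 20 14 (by decide) h124
        have h133 : G 15 = false := hE 20 15 (by decide) h124
        have h134 : G 8 = true := by
          have h := hB 3 8 15 (by decide) (by decide) (by decide)
          rw [h115, h133] at h
          simpa using h
        have h135 : G 10 = true := by
          have h := hB 7 10 13 (by decide) (by decide) (by decide)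
          rw [h119, h131] at h
          simpa using h
        have h136 : G 25 = false := hE 8 25 (by decide) h134
        have h137 : G 23 = false := hE 10 23 (by decide) h135
        have h138 : G 11 = true := by
          have h := hB 5 11 25 (by decide) (by decide) (by decide)
          rw [h117, h136] at h
          simpa using h
        have h139 : G 12 = true := by
          have h := hB 5 12 23 (by decide) (by decide) (by decide)
          rw [h117, h137] at h
          simpa using h
        have h140 : G 18 = false := hE 11 18 (by decide) h138
        have h141 : G 32 = false := hE 11 32 (by decide) h138
        have h142 : G 16 = false := hE 12 16 (by decide) h139
        have h143 : G 30 = false := hE 12 30 (by decide) h139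
        have h144 : G 31 = true := by
          have h := hB 16 18 31 (by decide) (by decide) (by decide)
          rw [h142, h140] at h
          simpa using h
        have h145 : G 17 = true := by
          have h := hB 17 30 32 (by decide) (by decide) (by decide)
          rw [h143, h141] at h
          simpa using h
        have h146 := hE 17 31 (by decide) h145
        rw [h144] at h146
        exact Bool.noConfusion h146
    · 
      have h147 : G 8 = false := hE 28 8 (by decide) h120
      have h148 : G 9 = false := hE 28 9 (by decide) h120
      have h149 : G 10 = false := hE 28 10 (by decide) h120
      have h150 : G 15 = true := by
        have h := hB 3 8 15 (by decide) (by decide) (by decide)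
        rw [h115, h147] at h
        simpa using h
      have h151 : G 13 = true := by
        have h := hB 7 10 13 (by decide) (by decide) (by decide)
        rw [h119, h149] at h
        simpa using h
      have h152 : G 20 = false := hE 13 20 (by decide) h151
      have h153 : G 25 = false := hE 13 25 (by decide) h151
      have h154 : G 23 = false := hE 15 23 (by decide) h150
      have h155 : G 14 = true := by
        have h := hB 0 14 20 (by decide) (by decide) (by decide)
        rw [h112, h152] at h
        simpa using h
      have h156 : G 11 = true := by
        have h := hB 5 11 25 (by decide) (by decide) (by decide)
        rw [h117, h153] at h
        simpa using h
      have h157 : G 12 = true := by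
        have h := hB 5 12 23 (by decide) (by decide) (by decide)
        rw [h117, h154] at h
        simpa using h
      have h158 : G 18 = false := hE 11 18 (by decide) h156
      have h159 : G 32 = false := hE 11 32 (by decide) h156
      have h160 : G 16 = false := hE 12 16 (by decide) h157
      have h161 : G 30 = false := hE 12 30 (by decide) h157
      have h162 : G 19 = false := hE 14 19 (by decide) h155
      have h163 : G 21 = false := hE 14 21 (by decide) h155
      have h164 : G 31 = true := by
        have h := hB 16 18 31 (by decide) (by decide) (by decide)
        rw [h160, h158] at h
        simpa using h
      have h165 : G 17 = true := by
        have h := hB 17 30 32 (by decide) (by decide) (by decide)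
        rw [h161, h159] at h
        simpa using h
      have h166 := hE 17 31 (by decide) h165
      rw [h164] at h166
      exact Bool.noConfusion h166
lemma two_not_sq : ∀ (n : ℤ), (2:ℤ) ≠ n * n := by
  intro n h
  have h1 : n ≤ 1 := by nlinarith
  have h2 : -1 ≤ n := by nlinarith
  interval_cases n <;> omega

noncomputable def s2 : ℤ√2 →+* ℝ := Zsqrtd.toReal (by norm_num)

lemma s2_inj : Function.Injective s2 := Zsqrtd.toReal_injective _ two_not_sq

def pemb (i : Fin 33) : Eu 3 := WithLp.toLp 2 fun j => ((s2 (pvec i j) : ℝ) : ℂ)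

lemma inner_pemb (i k : Fin 33) :
    (inner ℂ (pemb i) (pemb k) : ℂ) = ((s2 (pdot (pvec i) (pvec k)) : ℝ) : ℂ) := by
  rw [PiLp.inner_apply]
  simp only [RCLike.inner_apply', Fin.sum_univ_three, pemb, PiLp.toLp_apply, pdot, map_add, map_mul,
    Complex.conj_ofReal, Complex.ofReal_add, Complex.ofReal_mul]

lemma pvec_selfdot : ∀ i, pdot (pvec i) (pvec i) ≠ 0 := by decide

lemma inner_pemb_zero {i k : Fin 33} (h : pdot (pvec i) (pvec k) = 0) :
    (inner ℂ (pemb i) (pemb k) : ℂ) = 0 := by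
  rw [inner_pemb, h, map_zero]; simp

lemma pemb_ne_zero (i : Fin 33) : pemb i ≠ 0 := by
  intro h
  have h2 := inner_pemb i i
  rw [h, inner_zero_left] at h2
  have : s2 (pdot (pvec i) (pvec i)) = s2 0 := by
    rw [map_zero]
    exact_mod_cast h2.symm
  exact pvec_selfdot i (s2_inj this)

lemma ne_of_inner_zero {n : ℕ} {u w : Eu n} (hu : u ≠ 0) (h : (inner ℂ u w : ℂ) = 0) :
    u ≠ w := by
  rintro rfl
  exact hu (inner_self_eq_zero.1 h)

noncomputable def V3 : Finset (Eu 3) :=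
  @Finset.image _ _ (Classical.decEq _) pemb Finset.univ

lemma mem_V3 (i : Fin 33) : pemb i ∈ V3 := by
  classical
  simp [V3]

lemma ks3 : KSProp 3 V3 := by
  classical
  constructor
  · intro u hu
    obtain ⟨i, -, rfl⟩ := (@Finset.mem_image _ _ (Classical.decEq _) pemb Finset.univ u).1 hu
    exact pemb_ne_zero i
  · intro g hE hB
    apply peres_core (fun i => g (pemb i))
    · intro i j hd hi
      have h0 := inner_pemb_zero hd
      have hn := hE (pemb i) (mem_V3 i) (pemb j) (mem_V3 j) h0
      cases hj : g (pemb j)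
      · rfl
      · exact absurd ⟨hi, hj⟩ hn
    · intro i j k d1 d2 d3
      have e12 := inner_pemb_zero d1
      have e13 := inner_pemb_zero d2
      have e23 := inner_pemb_zero d3
      have e21 := inner_eq_zero_symm.1 e12
      have e31 := inner_eq_zero_symm.1 e13
      have e32 := inner_eq_zero_symm.1 e23
      have n12 : pemb i ≠ pemb j := ne_of_inner_zero (pemb_ne_zero i) e12
      have n13 : pemb i ≠ pemb k := ne_of_inner_zero (pemb_ne_zero i) e13
      have n23 : pemb j ≠ pemb k := ne_of_inner_zero (pemb_ne_zero j) e23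
      set S : Finset (Eu 3) := insert (pemb i) (insert (pemb j) {pemb k}) with hS
      have hsub : S ⊆ V3 := by
        intro u hu
        rcases Finset.mem_insert.1 hu with rfl | hu
        · exact mem_V3 i
        rcases Finset.mem_insert.1 hu with rfl | hu
        · exact mem_V3 j
        rw [Finset.mem_singleton.1 hu]
        exact mem_V3 k
      have hcard : S.card = 3 := by
        rw [hS, Finset.card_insert_of_notMem, Finset.card_insert_of_notMem,
          Finset.card_singleton]
        · simpa using n23
        · simp only [Finset.mem_insert, Finset.mem_singleton]
          push_neg
          exact ⟨n12, n13⟩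
      have horth : ∀ u ∈ S, ∀ w ∈ S, u ≠ w → (inner ℂ u w : ℂ) = 0 := by
        intro u hu w hw hne
        simp only [hS, Finset.mem_insert, Finset.mem_singleton] at hu hw
        rcases hu with rfl | rfl | rfl <;> rcases hw with rfl | rfl | rfl <;>
          first
            | exact absurd rfl hne
            | assumption
      obtain ⟨u, hu, hgu⟩ := hB S hsub hcard horth
      simp only [hS, Finset.mem_insert, Finset.mem_singleton] at hu
      rcases hu with rfl | rfl | rfl
      · exact Or.inl hgu
      · exact Or.inr (Or.inl hgu)
      · exact Or.inr (Or.inr hgu)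
lemma ks_step_aux {n : ℕ} {V : Finset (Eu n)} (hV : KSProp n V) {W : Finset (Eu (n+1))}
    (g : Eu (n+1) → Bool)
    (hE : ∀ u ∈ W, ∀ w ∈ W, (inner ℂ u w : ℂ) = 0 → ¬(g u = true ∧ g w = true))
    (hB : ∀ S : Finset (Eu (n+1)), S ⊆ W → S.card = n+1 →
        (∀ u ∈ S, ∀ w ∈ S, u ≠ w → (inner ℂ u w : ℂ) = 0) → ∃ u ∈ S, g u = true)
    {f : Fin n → Fin (n+1)} (hf : Function.Injective f)
    {e0 : Eu (n+1)} (he0 : e0 ≠ 0) (he0W : e0 ∈ W)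
    (hWsub : ∀ x ∈ V, emb f x ∈ W)
    (horth : ∀ x : Eu n, (inner ℂ e0 (emb f x) : ℂ) = 0)
    (hge : g e0 = false) : False := by
  classical
  apply hV.2 (fun x => g (emb f x))
  · intro u hu w hw h0
    refine hE _ (hWsub u hu) _ (hWsub w hw) ?_
    rw [inner_emb hf, h0]
  · intro S hSV hcard hSorth
    set S' : Finset (Eu (n+1)) := insert e0 (S.image (emb f)) with hS'
    have he0not : e0 ∉ S.image (emb f) := by
      intro h
      obtain ⟨x, _, hxe⟩ := Finset.mem_image.1 h
      have h2 := horth x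
      rw [hxe] at h2
      exact he0 (inner_self_eq_zero.1 h2)
    have hsub : S' ⊆ W := by
      intro u hu
      rcases Finset.mem_insert.1 hu with rfl | hu
      · exact he0W
      obtain ⟨x, hx, rfl⟩ := Finset.mem_image.1 hu
      exact hWsub x (hSV hx)
    have hcard' : S'.card = n + 1 := by
      rw [hS', Finset.card_insert_of_notMem he0not,
        Finset.card_image_of_injective _ (emb_injective hf), hcard]
    have horth' : ∀ u ∈ S', ∀ w ∈ S', u ≠ w → (inner ℂ u w : ℂ) = 0 := by
      intro u hu w hw hne
      rcases Finset.mem_insert.1 hu with rfl | hu <;>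
        rcases Finset.mem_insert.1 hw with h' | hw
      · exact absurd h'.symm hne
      · obtain ⟨x, _, rfl⟩ := Finset.mem_image.1 hw
        exact horth x
      · obtain ⟨x, _, rfl⟩ := Finset.mem_image.1 hu
        rw [h']
        exact inner_eq_zero_symm.1 (horth x)
      · obtain ⟨x, hx, rfl⟩ := Finset.mem_image.1 hu
        obtain ⟨y, hy, rfl⟩ := Finset.mem_image.1 hw
        have hxy : x ≠ y := fun h => hne (by rw [h])
        rw [inner_emb hf]
        exact hSorth x hx y hy hxy
    obtain ⟨u, hu, hgu⟩ := hB S' hsub hcard' horth'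
    rcases Finset.mem_insert.1 hu with rfl | hu
    · rw [hge] at hgu
      exact Bool.noConfusion hgu
    · obtain ⟨x, hx, rfl⟩ := Finset.mem_image.1 hu
      exact ⟨x, hx, hgu⟩

lemma ks_step {n : ℕ} (hn : 1 ≤ n) (h : ∃ V, KSProp n V) : ∃ W, KSProp (n+1) W := by
  classical
  obtain ⟨V, hV⟩ := h
  have hn1 : n - 1 < n := by omega
  set p : Fin (n+1) := Fin.castSucc ⟨n-1, hn1⟩ with hp
  set q : Fin (n+1) := Fin.last n with hq
  have hpq : p ≠ q := by
    intro h
    have h2 := congrArg Fin.val h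
    simp only [hp, hq, Fin.coe_castSucc, Fin.val_last] at h2
    omega
  set f1 : Fin n → Fin (n+1) := Fin.castSucc with hf1
  set f2 : Fin n → Fin (n+1) := fun i => Equiv.swap p q (Fin.castSucc i) with hf2
  have hf1i : Function.Injective f1 := Fin.castSucc_injective n
  have hf2i : Function.Injective f2 :=
    fun a b hab => hf1i ((Equiv.swap p q).injective hab)
  set e0 : Eu (n+1) := EuclideanSpace.single q 1 with he0def
  set e1 : Eu (n+1) := EuclideanSpace.single p 1 with he1def
  have hr1 : ∀ i : Fin n, f1 i ≠ q := fun i => (Fin.castSucc_lt_last i).ne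
  have hr2 : ∀ i : Fin n, f2 i ≠ p := by
    intro i h
    have h2 : Fin.castSucc i = Equiv.swap p q p := by
      have h3 := congrArg (Equiv.swap p q) h
      rwa [Equiv.swap_apply_self] at h3
    rw [Equiv.swap_apply_left] at h2
    exact hr1 i h2
  have horth1 : ∀ x : Eu n, (inner ℂ e0 (emb f1 x) : ℂ) = 0 := by
    intro x
    rw [he0def, EuclideanSpace.inner_single_left,
      emb_apply' _ _ (by rintro ⟨i, hi⟩; exact hr1 i hi)]
    simp
  have horth2 : ∀ x : Eu n, (inner ℂ e1 (emb f2 x) : ℂ) = 0 := by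
    intro x
    rw [he1def, EuclideanSpace.inner_single_left,
      emb_apply' _ _ (by rintro ⟨i, hi⟩; exact hr2 i hi)]
    simp
  have he0 : e0 ≠ 0 := by
    intro h
    have h2 := congrFun (congrArg WithLp.ofLp h) q
    rw [he0def] at h2
    simp [EuclideanSpace.single_apply] at h2
  have he1 : e1 ≠ 0 := by
    intro h
    have h2 := congrFun (congrArg WithLp.ofLp h) p
    rw [he1def] at h2
    simp [EuclideanSpace.single_apply] at h2
  have hoe : (inner ℂ e0 e1 : ℂ) = 0 := by
    rw [he0def, EuclideanSpace.inner_single_left, he1def,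
      EuclideanSpace.single_apply, if_neg (by exact fun h => hpq h.symm)]
    simp
  set W : Finset (Eu (n+1)) := (V.image (emb f1) ∪ V.image (emb f2)) ∪ {e0, e1} with hW
  have hmem0 : e0 ∈ W := by simp [hW]
  have hmem1 : e1 ∈ W := by simp [hW]
  have hmemf1 : ∀ x ∈ V, emb f1 x ∈ W := by
    intro x hx
    simp only [hW, Finset.mem_union]
    exact Or.inl (Or.inl (Finset.mem_image_of_mem _ hx))
  have hmemf2 : ∀ x ∈ V, emb f2 x ∈ W := by
    intro x hx
    simp only [hW, Finset.mem_union]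
    exact Or.inl (Or.inr (Finset.mem_image_of_mem _ hx))
  refine ⟨W, ?_, ?_⟩
  · intro u hu
    simp only [hW, Finset.mem_union, Finset.mem_insert, Finset.mem_singleton] at hu
    rcases hu with (hu | hu) | (rfl | rfl)
    · obtain ⟨x, hx, rfl⟩ := Finset.mem_image.1 hu
      exact emb_ne_zero hf1i (hV.1 x hx)
    · obtain ⟨x, hx, rfl⟩ := Finset.mem_image.1 hu
      exact emb_ne_zero hf2i (hV.1 x hx)
    · exact he0
    · exact he1
  · intro g hE hB
    by_cases hge : g e0 = true
    · have hge1 : g e1 = false := by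
        cases h1 : g e1
        · rfl
        · exact absurd ⟨hge, h1⟩ (hE e0 hmem0 e1 hmem1 hoe)
      exact ks_step_aux hV g hE hB hf2i he1 hmem1 hmemf2 horth2 hge1
    · have hge0 : g e0 = false := by
        cases h1 : g e0
        · rfl
        · exact absurd h1 hge
      exact ks_step_aux hV g hE hB hf1i he0 hmem0 hmemf1 horth1 hge0

lemma ks_exists : ∀ n, 3 ≤ n → ∃ V : Finset (Eu n), KSProp n V := by
  intro n hn
  induction n, hn using Nat.le_induction with
  | base => exact ⟨V3, ks3⟩
  | succ n hn ih => exact ks_step (by omega) ih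

end KSComb

section Hilbert

variable {H : Type*} [NormedAddCommGroup H] [InnerProductSpace ℂ H]

local notation "⟪" x ", " y "⟫" => @inner ℂ _ _ x y

/-- Rank-one projection onto the line spanned by `u`. -/
noncomputable def projOp (u : H) : H →L[ℂ] H :=
  (innerSL ℂ ((‖u‖:ℂ)⁻¹ • u)).smulRight ((‖u‖:ℂ)⁻¹ • u)

lemma projOp_apply (u x : H) :
    projOp u x = ⟪(‖u‖:ℂ)⁻¹ • u, x⟫ • ((‖u‖:ℂ)⁻¹ • u) := rfl

lemma inner_nw (u : H) (hu : u ≠ 0) :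
    ⟪(‖u‖:ℂ)⁻¹ • u, (‖u‖:ℂ)⁻¹ • u⟫ = 1 := by
  rw [inner_smul_left, inner_smul_right, inner_self_eq_norm_sq_to_K,
    map_inv₀, Complex.conj_ofReal]
  have h : (‖u‖:ℂ) ≠ 0 := by
    simpa [Complex.ofReal_eq_zero, norm_eq_zero] using hu
  field_simp
  simp

lemma projOp_herm (u : H) (x y : H) : ⟪projOp u x, y⟫ = ⟪x, projOp u y⟫ := by
  simp only [projOp_apply, inner_smul_left, inner_smul_right, inner_conj_symm,
    map_mul, Complex.conj_conj]
  ring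

lemma projOp_idem (u : H) (hu : u ≠ 0) : projOp u ∘L projOp u = projOp u := by
  ext x
  simp only [ContinuousLinearMap.comp_apply, projOp_apply, inner_smul_right,
    inner_nw u hu]
  rw [mul_one]

lemma projOp_rank (u : H) (hu : u ≠ 0) :
    LinearMap.rank (projOp u : H →ₗ[ℂ] H) = 1 := by
  have hw : ((‖u‖:ℂ)⁻¹ • u) ≠ 0 := by
    refine smul_ne_zero ?_ hu
    simpa [Complex.ofReal_eq_zero, norm_eq_zero] using hu
  have hrange : LinearMap.range (projOp u : H →ₗ[ℂ] H) = ℂ ∙ ((‖u‖:ℂ)⁻¹ • u) := by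
    apply le_antisymm
    · rintro y ⟨x, rfl⟩
      exact Submodule.mem_span_singleton.2 ⟨_, rfl⟩
    · rw [Submodule.span_singleton_le_iff_mem]
      refine ⟨(‖u‖:ℂ)⁻¹ • u, ?_⟩
      show projOp u ((‖u‖:ℂ)⁻¹ • u) = (‖u‖:ℂ)⁻¹ • u
      rw [projOp_apply, inner_nw u hu, one_smul]
  rw [LinearMap.rank, hrange, Module.rank_eq_one_iff_finrank_eq_one]
  exact finrank_span_singleton hw

lemma projOp_comp_orth {u v : H} (h : ⟪u, v⟫ = 0) : projOp u ∘L projOp v = 0 := by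
  ext x
  simp only [ContinuousLinearMap.comp_apply, projOp_apply, inner_smul_right,
    inner_smul_left, ContinuousLinearMap.zero_apply, h]
  simp

lemma proj_eigen_zero {u ψ : H} (hu : u ≠ 0) (h : projOp u ψ = 0) : ⟪u, ψ⟫ = 0 := by
  rw [projOp_apply] at h
  have hw : ((‖u‖:ℂ)⁻¹ • u) ≠ 0 := by
    refine smul_ne_zero ?_ hu
    simpa [Complex.ofReal_eq_zero, norm_eq_zero] using hu
  rcases smul_eq_zero.1 h with h2 | h2
  · rw [inner_smul_left] at h2
    rcases mul_eq_zero.1 h2 with h3 | h3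
    · exfalso
      apply hu
      rw [map_inv₀, Complex.conj_ofReal, inv_eq_zero, Complex.ofReal_eq_zero,
        norm_eq_zero] at h3
      exact h3
    · exact h3
  · exact absurd h2 hw

lemma projOp_both_one {u v ψ : H} (huv : ⟪u, v⟫ = 0)
    (h1 : projOp u ψ = ψ) (h2 : projOp v ψ = ψ) (hψ : ψ ≠ 0) : False := by
  apply hψ
  have h3 : projOp u (projOp v ψ) = ψ := by rw [h2, h1]
  rw [← h3]
  have h4 := projOp_comp_orth huv
  calc projOp u (projOp v ψ) = (projOp u ∘L projOp v) ψ := rfl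
    _ = 0 := by rw [h4]; rfl

lemma val_zero_or_one {A : H →L[ℂ] H} (hA : A ∘L A = A) {c : ℝ} {ψ : H}
    (hψ : ψ ≠ 0) (h : A ψ = (c:ℂ) • ψ) : c = 0 ∨ c = 1 := by
  have h2 : ((c:ℂ) * c) • ψ = (c:ℂ) • ψ := by
    calc ((c:ℂ) * c) • ψ = (c:ℂ) • ((c:ℂ) • ψ) := by rw [mul_smul]
      _ = (c:ℂ) • A ψ := by rw [h]
      _ = A ((c:ℂ) • ψ) := (A.map_smul _ _).symm
      _ = A (A ψ) := by rw [h]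
      _ = (A ∘L A) ψ := rfl
      _ = A ψ := by rw [hA]
      _ = (c:ℂ) • ψ := h
  have h3 : ((c:ℂ) * c - c) • ψ = 0 := by rw [sub_smul, h2, sub_self]
  rcases smul_eq_zero.1 h3 with h4 | h4
  · have h5 : (c:ℂ) * ((c:ℂ) - 1) = 0 := by ring_nf; ring_nf at h4; linear_combination h4
    rcases mul_eq_zero.1 h5 with h6 | h6
    · left; exact_mod_cast h6
    · right
      have : (c:ℂ) = 1 := by linear_combination h6
      exact_mod_cast this
  · exact absurd h4 hψ

lemma eq_zero_of_orth_family [FiniteDimensional ℂ H] {s : Finset H}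
    (hcard : s.card = Module.finrank ℂ H)
    (h0 : ∀ x ∈ s, x ≠ 0)
    (horth : ∀ x ∈ s, ∀ y ∈ s, x ≠ y → ⟪x, y⟫ = 0)
    {ψ : H} (hψ : ∀ x ∈ s, ⟪x, ψ⟫ = 0) : ψ = 0 := by
  classical
  rcases s.eq_empty_or_nonempty with rfl | hne
  · have h0' : Module.finrank ℂ H = 0 := by simpa using hcard.symm
    haveI := Module.finrank_zero_iff (R := ℂ) (M := H) |>.1 h0'
    exact Subsingleton.elim ψ 0
  haveI : Nonempty {x // x ∈ s} := ⟨⟨hne.choose, hne.choose_spec⟩⟩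
  set o : {x // x ∈ s} → H := fun x => ((‖(x:H)‖:ℂ))⁻¹ • (x : H) with ho
  have hon : Orthonormal ℂ o := by
    rw [orthonormal_iff_ite]
    intro i j
    by_cases hij : i = j
    · rw [hij, if_pos rfl]
      exact inner_nw _ (h0 j j.2)
    · rw [if_neg hij]
      have hne : (i : H) ≠ (j : H) := fun h => hij (Subtype.ext h)
      simp only [ho, inner_smul_left, inner_smul_right]
      rw [horth i i.2 j j.2 hne]
      ring
  have hspan : Submodule.span ℂ (Set.range o) = ⊤ := by
    apply hon.linearIndependent.span_eq_top_of_card_eq_finrank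
    rw [Fintype.card_coe, hcard]
  have hψs : ∀ (i : {x // x ∈ s}), ⟪o i, ψ⟫ = 0 := by
    intro i
    simp only [ho, inner_smul_left]
    rw [hψ i i.2, mul_zero]
  have hmem : ψ ∈ Submodule.span ℂ (Set.range o) := by rw [hspan]; trivial
  obtain ⟨c, hc⟩ := (Submodule.mem_span_range_iff_exists_fun ℂ).1 hmem
  have hzero : ⟪ψ, ψ⟫ = (0:ℂ) := by
    nth_rewrite 1 [← hc]
    rw [sum_inner]
    refine Finset.sum_eq_zero fun i _ => ?_
    rw [inner_smul_left, hψs i, mul_zero]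
  exact inner_self_eq_zero.1 hzero

end Hilbert

/-- Value no-go theorem: on any finite-dimensional complex Hilbert space of dimension
at least 3, there is a finite set of rank-1 projections for which no valuation exists. -/
theorem exists_finite_rankOneProjs_no_valuation
    {H : Type*} [NormedAddCommGroup H] [InnerProductSpace ℂ H]
    [FiniteDimensional ℂ H] (hdim : 3 ≤ Module.finrank ℂ H) :
    ∃ O : Finset (H →L[ℂ] H),
      (∀ A ∈ O, IsRankOneProjOp A) ∧
      ¬ ∃ v : (H →L[ℂ] H) → ℝ, IsValuationOp (↑O) v := by
  classical
  set n := Module.finrank ℂ H with hn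
  obtain ⟨V, hV0, hVg⟩ := ks_exists n hdim
  set b := stdOrthonormalBasis ℂ H with hb
  set T : Eu n ≃ₗᵢ[ℂ] H := b.repr.symm with hT
  set O : Finset (H →L[ℂ] H) := V.image (fun x => projOp (T x)) with hO
  have hTne : ∀ x ∈ V, T x ≠ 0 := by
    intro x hx h
    exact hV0 x hx (by simpa using congrArg T.symm h)
  refine ⟨O, ?_, ?_⟩
  · intro A hA
    obtain ⟨x, hx, rfl⟩ := Finset.mem_image.1 hA
    exact ⟨projOp_herm _, projOp_idem _ (hTne x hx), projOp_rank _ (hTne x hx)⟩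
  · rintro ⟨v, hv1, hv2⟩
    apply hVg (fun x => decide (v (projOp (T x)) = 1))
    · -- orthogonal pairs cannot both be assigned the value 1
      intro x hx y hy hxy
      rintro ⟨hgx, hgy⟩
      have hvx : v (projOp (T x)) = 1 := of_decide_eq_true hgx
      have hvy : v (projOp (T y)) = 1 := of_decide_eq_true hgy
      have huv : (inner ℂ (T x) (T y) : ℂ) = 0 := by
        rw [T.inner_map_map]; exact hxy
      have huv' : (inner ℂ (T y) (T x) : ℂ) = 0 := inner_eq_zero_symm.1 huv
      set s : Finset (H →L[ℂ] H) := insert (projOp (T x)) {projOp (T y)} with hs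
      have hsub : ↑s ⊆ (↑O : Set (H →L[ℂ] H)) := by
        intro A hA
        simp only [hs, Finset.coe_insert, Set.mem_insert_iff, Finset.coe_singleton,
          Set.mem_singleton_iff] at hA
        rcases hA with rfl | rfl
        · exact Finset.mem_coe.2 (Finset.mem_image_of_mem _ hx)
        · exact Finset.mem_coe.2 (Finset.mem_image_of_mem _ hy)
      have hcomm : ∀ A ∈ s, ∀ B ∈ s, A ∘L B = B ∘L A := by
        intro A hA B hB
        simp only [hs, Finset.mem_insert, Finset.mem_singleton] at hA hB
        rcases hA with rfl | rfl <;> rcases hB with rfl | rfl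
        · rfl
        · rw [projOp_comp_orth huv, projOp_comp_orth huv']
        · rw [projOp_comp_orth huv', projOp_comp_orth huv]
        · rfl
      obtain ⟨ψ, hψ0, hψ⟩ := hv2 s hsub hcomm
      have h1 : projOp (T x) ψ = ψ := by
        have h := hψ _ (Finset.mem_insert_self _ _)
        rwa [hvx, Complex.ofReal_one, one_smul] at h
      have h2 : projOp (T y) ψ = ψ := by
        have h := hψ _ (Finset.mem_insert_of_mem (Finset.mem_singleton_self _))
        rwa [hvy, Complex.ofReal_one, one_smul] at h
      exact projOp_both_one huv h1 h2 hψ0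
    · -- every full orthogonal family in O contains a vector valued 1
      intro S hSV hcard hSorth
      set s : Finset (H →L[ℂ] H) := S.image (fun x => projOp (T x)) with hs
      have hsub : ↑s ⊆ (↑O : Set (H →L[ℂ] H)) := by
        intro A hA
        obtain ⟨x, hx, rfl⟩ := Finset.mem_image.1 (Finset.mem_coe.1 hA)
        exact Finset.mem_coe.2 (Finset.mem_image_of_mem _ (hSV hx))
      have hcomm : ∀ A ∈ s, ∀ B ∈ s, A ∘L B = B ∘L A := by
        intro A hA B hB
        obtain ⟨x, hx, rfl⟩ := Finset.mem_image.1 hA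
        obtain ⟨y, hy, rfl⟩ := Finset.mem_image.1 hB
        by_cases hxy : x = y
        · rw [hxy]
        · have h1 : (inner ℂ (T x) (T y) : ℂ) = 0 := by
            rw [T.inner_map_map]; exact hSorth x hx y hy hxy
          rw [projOp_comp_orth h1, projOp_comp_orth (inner_eq_zero_symm.1 h1)]
      obtain ⟨ψ, hψ0, hψ⟩ := hv2 s hsub hcomm
      by_contra hno
      push_neg at hno
      have hval0 : ∀ x ∈ S, v (projOp (T x)) = 0 := by
        intro x hx
        have hne1 : v (projOp (T x)) ≠ 1 := fun h => hno x hx (decide_eq_true h)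
        have hmem : projOp (T x) ∈ (↑O : Set (H →L[ℂ] H)) :=
          Finset.mem_coe.2 (Finset.mem_image_of_mem _ (hSV hx))
        obtain ⟨φ, hφ0, hφ⟩ := hv1 _ hmem
        rcases val_zero_or_one (projOp_idem _ (hTne x (hSV hx))) hφ0 hφ with h | h
        · exact h
        · exact absurd h hne1
      have hinner : ∀ x ∈ S, (inner ℂ (T x) ψ : ℂ) = 0 := by
        intro x hx
        have h := hψ _ (Finset.mem_image_of_mem _ hx)
        rw [hval0 x hx, Complex.ofReal_zero, zero_smul] at h
        exact proj_eigen_zero (hTne x (hSV hx)) h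
      set t : Finset H := S.image (fun x => T x) with ht
      have hψeq : ψ = 0 := by
        refine eq_zero_of_orth_family (s := t) ?_ ?_ ?_ ?_
        · rw [ht, Finset.card_image_of_injective _ T.injective, hcard]
        · intro z hz
          obtain ⟨x, hx, rfl⟩ := Finset.mem_image.1 hz
          exact hTne x (hSV hx)
        · intro z hz w hw hzw
          obtain ⟨x, hx, rfl⟩ := Finset.mem_image.1 hz
          obtain ⟨y, hy, rfl⟩ := Finset.mem_image.1 hw
          have hxy : x ≠ y := fun h => hzw (by rw [h])
          rw [T.inner_map_map]
          exact hSorth x hx y hy hxy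
        · intro z hz
          obtain ⟨x, hx, rfl⟩ := Finset.mem_image.1 hz
          exact hinner x hx
      exact hψ0 hψeq
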